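/- Let α < 0, β > 0, and V(x,y) = αx² + 4βy² + (1/2)(x²+4y²)². Then T(x,y) := -2V·det Hess V + V_xx V_y² + V_yy V_x² - 2 V_x V_y V_xy equals -16(x²+4y²)²[(x²+4y²)² + α(3β+3x²+4y²) + β(x²+12y²)]. -/

import Mathlib

theorem stmt_7 (α β : ℝ) (hα : α < 0) (hβ : 0 < β)
    (V Vx Vy Vxx Vyy Vxy : ℝ → ℝ → ℝ)
    (hV : ∀ x y, V x y = α*x^2 + 4*β*y^2 + (1/2)*(x^2 + 4*y^2)^2)
    (hVx : ∀ x y, Vx x y = deriv (fun t => V t y) x)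
    (hVy : ∀ x y, Vy x y = deriv (fun t => V x t) y)
    (hVxx : ∀ x y, Vxx x y = deriv (fun t => Vx t y) x)
    (hVyy : ∀ x y, Vyy x y = deriv (fun t => Vy x t) y)
    (hVxy : ∀ x y, Vxy x y = deriv (fun t => Vx x t) y) :
    ∀ x y : ℝ,
      -2 * V x y * (Vxx x y * Vyy x y - (Vxy x y)^2)
        + Vxx x y * (Vy x y)^2 + Vyy x y * (Vx x y)^2
        - 2 * Vx x y * Vy x y * Vxy x y
      = -16 * (x^2 + 4*y^2)^2 *
          ((x^2 + 4*y^2)^2 + α*(3*β + 3*x^2 + 4*y^2) + β*(x^2 + 12*y^2)) := by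
  have hx : ∀ x y : ℝ, Vx x y = 2*α*x + 2*x*(x^2+4*y^2) := by
    intro x y
    rw [hVx]
    have : (fun t => V t y) = fun t : ℝ => α*t^2 + 4*β*y^2 + (1/2)*(t^2+4*y^2)^2 := by
      funext t; exact hV t y
    rw [this]
    have h : HasDerivAt (fun t : ℝ => α*t^2 + 4*β*y^2 + (1/2)*(t^2+4*y^2)^2)
        (2*α*x + 2*x*(x^2+4*y^2)) x := by
      have h1 : HasDerivAt (fun t : ℝ => t) 1 x := hasDerivAt_id x
      have := (((h1.pow 2).const_mul α).add_const (4*β*y^2)).add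
        ((((h1.pow 2).add_const (4*y^2)).pow 2).const_mul (1/2))
      refine this.congr_deriv ?_
      simp only [Pi.pow_apply, Nat.add_one_sub_one, pow_one]
      ring
    exact h.deriv
  have hy : ∀ x y : ℝ, Vy x y = 8*β*y + 8*y*(x^2+4*y^2) := by
    intro x y
    rw [hVy]
    have : (fun t => V x t) = fun t : ℝ => α*x^2 + 4*β*t^2 + (1/2)*(x^2+4*t^2)^2 := by
      funext t; exact hV x t
    rw [this]
    have h : HasDerivAt (fun t : ℝ => α*x^2 + 4*β*t^2 + (1/2)*(x^2+4*t^2)^2)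
        (8*β*y + 8*y*(x^2+4*y^2)) y := by
      have h1 : HasDerivAt (fun t : ℝ => t) 1 y := hasDerivAt_id y
      have := ((hasDerivAt_const y (α*x^2)).add ((h1.pow 2).const_mul (4*β))).add
        (((((h1.pow 2).const_mul 4).const_add (x^2)).pow 2).const_mul (1/2))
      refine this.congr_deriv ?_
      simp only [Pi.pow_apply, Nat.add_one_sub_one, pow_one]
      ring
    exact h.deriv
  have hxx : ∀ x y : ℝ, Vxx x y = 2*α + 6*x^2 + 8*y^2 := by
    intro x y
    rw [hVxx]
    have : (fun t => Vx t y) = fun t : ℝ => 2*α*t + 2*t*(t^2+4*y^2) := by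
      funext t; exact hx t y
    rw [this]
    have h1 : HasDerivAt (fun t : ℝ => t) 1 x := hasDerivAt_id x
    have h : HasDerivAt (fun t : ℝ => 2*α*t + 2*t*(t^2+4*y^2)) (2*α + 6*x^2 + 8*y^2) x := by
      have := (h1.const_mul (2*α)).add
        ((h1.const_mul 2).mul ((h1.pow 2).add_const (4*y^2)))
      refine this.congr_deriv ?_
      simp only [Pi.pow_apply, Nat.add_one_sub_one, pow_one]
      ring
    exact h.deriv
  have hyy : ∀ x y : ℝ, Vyy x y = 8*β + 8*x^2 + 96*y^2 := by
    intro x y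
    rw [hVyy]
    have : (fun t => Vy x t) = fun t : ℝ => 8*β*t + 8*t*(x^2+4*t^2) := by
      funext t; exact hy x t
    rw [this]
    have h1 : HasDerivAt (fun t : ℝ => t) 1 y := hasDerivAt_id y
    have h : HasDerivAt (fun t : ℝ => 8*β*t + 8*t*(x^2+4*t^2)) (8*β + 8*x^2 + 96*y^2) y := by
      have := (h1.const_mul (8*β)).add
        ((h1.const_mul 8).mul (((h1.pow 2).const_mul 4).const_add (x^2)))
      refine this.congr_deriv ?_
      simp only [Pi.pow_apply, Nat.add_one_sub_one, pow_one]
      ring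
    exact h.deriv
  have hxy : ∀ x y : ℝ, Vxy x y = 16*x*y := by
    intro x y
    rw [hVxy]
    have : (fun t => Vx x t) = fun t : ℝ => 2*α*x + 2*x*(x^2+4*t^2) := by
      funext t; exact hx x t
    rw [this]
    have h1 : HasDerivAt (fun t : ℝ => t) 1 y := hasDerivAt_id y
    have h : HasDerivAt (fun t : ℝ => 2*α*x + 2*x*(x^2+4*t^2)) (16*x*y) y := by
      have := (hasDerivAt_const y (2*α*x)).add
        ((((h1.pow 2).const_mul 4).const_add (x^2)).const_mul (2*x))
      refine this.congr_deriv ?_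
      simp only [Pi.pow_apply, Nat.add_one_sub_one, pow_one]
      ring
    exact h.deriv
  intro x y
  rw [hV, hx, hy, hxx, hyy, hxy]
  ring
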